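/- (Optimality criterion used in the successive remainders method.) Fix k ∈ ℝ and let f ∈ F̄_k be such that the remainder R = T − f(𝔱) is alternated and satisfies max_i R_i = −min_i R_i. Then f(𝔱) is a best approximation of T in F_k: ‖T − f(𝔱)‖_∞ ≤ ‖T − g(𝔱)‖_∞ for every g ∈ F̄_k. -/
import Mathlib

/-- A function `x ↦ a·e^{kx} + b` cannot be positive, negative, positive at
three increasing points. -/
lemma expaff_no_sign_change (a b k x₁ x₂ x₃ : ℝ) (h12 : x₁ < x₂) (h23 : x₂ < x₃)
    (h1 : 0 < a * Real.exp (k * x₁) + b)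
    (h2 : a * Real.exp (k * x₂) + b < 0)
    (h3 : 0 < a * Real.exp (k * x₃) + b) : False := by
  set u₁ := Real.exp (k * x₁) with hu₁
  set u₂ := Real.exp (k * x₂) with hu₂
  set u₃ := Real.exp (k * x₃) with hu₃
  have hprod : (u₁ - u₂) * (u₃ - u₂) ≤ 0 := by
    rcases le_or_gt 0 k with hk | hk
    · have h21 : u₁ ≤ u₂ := Real.exp_le_exp.mpr (by nlinarith)
      have h32 : u₂ ≤ u₃ := Real.exp_le_exp.mpr (by nlinarith)
      exact mul_nonpos_of_nonpos_of_nonneg (by linarith) (by linarith)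
    · have h21 : u₂ ≤ u₁ := Real.exp_le_exp.mpr (by nlinarith)
      have h32 : u₃ ≤ u₂ := Real.exp_le_exp.mpr (by nlinarith)
      exact mul_nonpos_of_nonneg_of_nonpos (by linarith) (by linarith)
  have ha1 : 0 < a * (u₁ - u₂) := by nlinarith
  have ha3 : 0 < a * (u₃ - u₂) := by nlinarith
  have h4 : 0 < a ^ 2 * ((u₁ - u₂) * (u₃ - u₂)) := by
    have h := mul_pos ha1 ha3
    have heq : (a * (u₁ - u₂)) * (a * (u₃ - u₂)) = a ^ 2 * ((u₁ - u₂) * (u₃ - u₂)) := by ring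
    linarith [heq ▸ h]
  have h5 : a ^ 2 * ((u₁ - u₂) * (u₃ - u₂)) ≤ 0 :=
    mul_nonpos_of_nonneg_of_nonpos (sq_nonneg a) hprod
  linarith

/-- Optimality criterion: Fix `k ∈ ℝ` and let
`f(t) = A·e^{kt} + B ∈ F̄_k` be such that the remainder `R = T − f(𝔱)` is
alternated and satisfies `max R = −min R`.  Then `f(𝔱)` is a best approximation
of `T` in `F_k`: `‖T − f(𝔱)‖_∞ ≤ ‖T − g(𝔱)‖_∞` for every `g ∈ F̄_k`.
The norm on `Fin n → ℝ` is the sup-norm. -/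
theorem alternated_equioscillation_is_best {n : ℕ}
    (t : Fin n → ℝ) (ht : StrictMono t) (T : Fin n → ℝ)
    (k : ℝ) (A B : ℝ)
    (R : Fin n → ℝ)
    (hR : R = fun i => T i - (A * Real.exp (k * t i) + B))
    (halt :
      (∃ M₁ m₁ M₂ : Fin n, M₁ < m₁ ∧ m₁ < M₂ ∧
        (∀ i, R i ≤ R M₁) ∧ R M₂ = R M₁ ∧ (∀ i, R m₁ ≤ R i)) ∨
      (∃ m₁ M₁ m₂ : Fin n, m₁ < M₁ ∧ M₁ < m₂ ∧
        (∀ i, R m₁ ≤ R i) ∧ R m₂ = R m₁ ∧ (∀ i, R i ≤ R M₁)))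
    (hsym : ∃ i j : Fin n, (∀ l, R l ≤ R i) ∧ (∀ l, R j ≤ R l) ∧ R i = -(R j)) :
    ∀ A' B' : ℝ,
      ‖T - (fun i => A * Real.exp (k * t i) + B)‖ ≤
        ‖T - (fun i => A' * Real.exp (k * t i) + B')‖ := by
  intro A' B'
  by_contra hlt
  push_neg at hlt
  obtain ⟨i0, j0, hmax, hmin, hij⟩ := hsym
  set E := R i0 with hE
  have hE0 : 0 ≤ E := by have := hmin i0; linarith
  have hTf : T - (fun i => A * Real.exp (k * t i) + B) = R := by
    funext l; simp [hR]
  have hRnorm : ‖R‖ ≤ E := by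
    apply pi_norm_le_iff_of_nonneg hE0 |>.mpr
    intro l
    rw [Real.norm_eq_abs, abs_le]
    exact ⟨by have := hmin l; linarith, hmax l⟩
  have hlt' : ‖T - (fun i => A' * Real.exp (k * t i) + B')‖ < E := by
    rw [hTf] at hlt; linarith
  set d : Fin n → ℝ := fun l => (A' - A) * Real.exp (k * t l) + (B' - B) with hd
  have key : ∀ l, |R l - d l| < E := by
    intro l
    have h1 : ‖(T - (fun i => A' * Real.exp (k * t i) + B')) l‖ ≤
        ‖T - (fun i => A' * Real.exp (k * t i) + B')‖ := norm_le_pi_norm _ l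
    have h2 : (T - (fun i => A' * Real.exp (k * t i) + B')) l = R l - d l := by
      simp [hR, hd]; ring
    rw [h2, Real.norm_eq_abs] at h1
    linarith
  rcases halt with ⟨M₁, m₁, M₂, h12, h23, hM, hMM, hm⟩ |
    ⟨m₁, M₁, m₂, h12, h23, hm, hmm, hM⟩
  · have hM₁ : R M₁ = E := le_antisymm (hmax M₁) (hM i0)
    have hM₂ : R M₂ = E := by rw [hMM]; exact hM₁
    have hm₁ : R m₁ = -E := by
      have h1 : R m₁ ≤ R j0 := hm j0
      have h2 : R j0 ≤ R m₁ := hmin m₁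
      have := le_antisymm h1 h2
      rw [this]; linarith
    have k1 := key M₁; rw [hM₁] at k1
    have k2 := key m₁; rw [hm₁] at k2
    have k3 := key M₂; rw [hM₂] at k3
    rw [abs_lt] at k1 k2 k3
    exact expaff_no_sign_change (A' - A) (B' - B) k (t M₁) (t m₁) (t M₂)
      (ht h12) (ht h23) (by simp only [hd] at k1 ⊢; linarith [k1.2])
      (by simp only [hd] at k2 ⊢; linarith [k2.1])
      (by simp only [hd] at k3 ⊢; linarith [k3.2])
  · have hM₁ : R M₁ = E := le_antisymm (hmax M₁) (hM i0)
    have hm₁ : R m₁ = -E := by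
      have h1 : R m₁ ≤ R j0 := hm j0
      have h2 : R j0 ≤ R m₁ := hmin m₁
      have := le_antisymm h1 h2
      rw [this]; linarith
    have hm₂ : R m₂ = -E := by rw [hmm]; exact hm₁
    have k1 := key m₁; rw [hm₁] at k1
    have k2 := key M₁; rw [hM₁] at k2
    have k3 := key m₂; rw [hm₂] at k3
    rw [abs_lt] at k1 k2 k3
    exact expaff_no_sign_change (-(A' - A)) (-(B' - B)) k (t m₁) (t M₁) (t m₂)
      (ht h12) (ht h23) (by simp only [hd] at k1 ⊢; nlinarith [k1.1])
      (by simp only [hd] at k2 ⊢; nlinarith [k2.2])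
      (by simp only [hd] at k3 ⊢; nlinarith [k3.1])
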